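/- Let n ≥ t ≥ r ≥ 2 be integers. Every n-vertex graph G containing no clique on t+1 vertices satisfies N(K_r, G) ≤ N(K_r, T(n,t)), where N(K_r, G) denotes the number of r-cliques in G and T(n,t) is the Turán graph (the balanced complete t-partite graph on n vertices). -/

import Mathlib

open SimpleGraph Finset

open Classical in
/-- Number of `r`-cliques of `G` spanned inside the vertex set `s`. -/
noncomputable def cliqueCnt {V : Type*} (G : SimpleGraph V) (r : ℕ) (s : Finset V) : ℕ :=
  #(s.powerset.filter (fun A => G.IsNClique r A))

/-- Number of `r`-cliques of the Turán graph `T(n,t)`. -/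
noncomputable def tNum (n t r : ℕ) : ℕ := cliqueCnt (turanGraph n t) r Finset.univ

lemma cliqueCnt_eq {V : Type*} (G : SimpleGraph V) (r : ℕ) (s : Finset V)
    [inst : DecidablePred (fun A => G.IsNClique r A)] :
    cliqueCnt G r s = #(s.powerset.filter (fun A => G.IsNClique r A)) := by
  rw [cliqueCnt]
  congr 1
  exact Finset.filter_congr_decidable _ _ _

lemma isNClique_image {α β : Type*} [DecidableEq β] {G : SimpleGraph α} {H : SimpleGraph β}
    {f : α → β} (hinj : Function.Injective f)
    (hadj : ∀ a b, G.Adj a b → H.Adj (f a) (f b)) {A : Finset α} {r : ℕ}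
    (h : G.IsNClique r A) : H.IsNClique r (A.image f) := by
  constructor
  · rintro x hx y hy hxy
    simp only [coe_image, Set.mem_image, mem_coe] at hx hy
    obtain ⟨a, ha, rfl⟩ := hx
    obtain ⟨b, hb, rfl⟩ := hy
    exact hadj a b (h.1 ha hb (fun hab => hxy (by rw [hab])))
  · rw [Finset.card_image_of_injective _ hinj, h.2]

lemma cliqueCnt_zero {V : Type*} (G : SimpleGraph V) (s : Finset V) :
    cliqueCnt G 0 s = 1 := by
  classical
  rw [cliqueCnt]
  convert_to #({∅} : Finset (Finset V)) = 1
  · congr 1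
    ext A
    simp only [mem_filter, mem_powerset, mem_singleton]
    constructor
    · rintro ⟨-, h⟩
      simpa using h.2
    · rintro rfl
      simp [isNClique_empty]
  · simp

lemma cliqueCnt_empty {V : Type*} (G : SimpleGraph V) {r : ℕ} (hr : 1 ≤ r) :
    cliqueCnt G r ∅ = 0 := by
  classical
  rw [cliqueCnt, Finset.card_eq_zero, Finset.filter_eq_empty_iff]
  rintro A hA
  simp only [mem_powerset, Finset.subset_empty] at hA
  subst hA
  simp only [isNClique_empty]
  omega

lemma tNum_zero {t r : ℕ} (hr : 1 ≤ r) : tNum 0 t r = 0 := by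
  rw [tNum]
  have : (univ : Finset (Fin 0)) = ∅ := by simp
  rw [this, cliqueCnt_empty _ hr]

lemma tNum_mono {d D : ℕ} (t r : ℕ) (h : d ≤ D) : tNum d t r ≤ tNum D t r := by
  classical
  rw [tNum, tNum, cliqueCnt, cliqueCnt]
  apply Finset.card_le_card_of_injOn (fun A => A.image (Fin.castLE h))
  · intro A hA
    simp only [mem_coe, mem_filter, mem_powerset] at hA ⊢
    refine ⟨Finset.subset_univ _, ?_⟩
    apply isNClique_image (Fin.castLE_injective h) _ hA.2
    intro a b hab
    simpa [turanGraph] using hab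
  · intro A _ B _ hAB
    exact Finset.image_injective (Fin.castLE_injective h) hAB




lemma psi_arith (t q c u j k : ℕ) (hu : u + 1 = t) (hct : c < t) (hju : j < u)
    (hik : u * k + j < q * u + c) :
    (if j < c then j else j + 1) + k * t + 1 ≤ q * t + c := by
  have hqt : q * t = q * u + q := by rw [← hu, Nat.mul_succ]
  split_ifs with hjc
  · have hkq : k ≤ q := by
      by_contra hcon
      push_neg at hcon
      have h2 : (q+1) * u ≤ k * u := Nat.mul_le_mul_right u hcon
      have h3 : (q+1) * u = q * u + u := by ring
      have h4 : k * u = u * k := Nat.mul_comm _ _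
      omega
    have : k * t ≤ q * t := Nat.mul_le_mul_right t hkq
    omega
  · push_neg at hjc
    have hkq : k < q := by
      have h4 : k * u = u * k := Nat.mul_comm _ _
      have h5 : k * u < q * u := by omega
      exact Nat.lt_of_mul_lt_mul_right h5
    have h6 : (k+1) * t ≤ q * t := Nat.mul_le_mul_right t (by omega)
    have h7 : (k+1) * t = k * t + t := by ring
    omega

/-- residue relabelling avoiding `(m-1) % t` -/
def psiF (m t : ℕ) : ℕ → ℕ := fun j => if j < (m-1) % t then j else j + 1

lemma psiF_lt (m t : ℕ) (ht : 1 ≤ t) {j : ℕ} (hj : j < t - 1) : psiF m t j < t := by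
  unfold psiF; split_ifs with h
  · have := Nat.mod_lt (m-1) (show 0 < t by omega); omega
  · omega

lemma psiF_ne (m t : ℕ) (j : ℕ) : psiF m t j ≠ (m-1) % t := by
  unfold psiF; split_ifs with h <;> omega

lemma psiF_inj (m t : ℕ) : Function.Injective (psiF m t) := by
  intro a b hab
  unfold psiF at hab
  split_ifs at hab <;> omega

/-- the vertex embedding `T(D, t-1) → T(m, t)` into the non-neighbours of the last vertex -/
def phiF (m t : ℕ) (ht : 2 ≤ t) : Fin (m - 1 - (m-1)/t) → Fin m := fun i =>
  ⟨psiF m t ((i : ℕ) % (t-1)) + ((i : ℕ) / (t-1)) * t, by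
    have h1 : t * ((m-1)/t) + (m-1)%t = m - 1 := Nat.div_add_mod _ t
    have hqu : ((m-1)/t) * (t-1) + (m-1)/t = ((m-1)/t) * t := by
      rw [← Nat.mul_succ]
      congr 1
      omega
    have hqt : ((m-1)/t) * t = t * ((m-1)/t) := Nat.mul_comm _ _
    have hiD : (i : ℕ) < m - 1 - (m-1)/t := i.2
    have hik : (t-1) * ((i:ℕ)/(t-1)) + (i:ℕ)%(t-1) = (i:ℕ) := Nat.div_add_mod _ _
    have key := psi_arith t ((m-1)/t) ((m-1)%t) (t-1) ((i:ℕ)%(t-1)) ((i:ℕ)/(t-1))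
      (by omega) (Nat.mod_lt _ (by omega)) (Nat.mod_lt _ (by omega)) (by omega)
    unfold psiF
    split_ifs at key ⊢ <;> omega⟩

lemma phiF_val (m t : ℕ) (ht : 2 ≤ t) (i : Fin (m - 1 - (m-1)/t)) :
    (phiF m t ht i : ℕ) = psiF m t ((i : ℕ) % (t-1)) + ((i : ℕ) / (t-1)) * t := rfl

lemma phiF_mod (m t : ℕ) (ht : 2 ≤ t) (i : Fin (m - 1 - (m-1)/t)) :
    ((phiF m t ht i : ℕ)) % t = psiF m t ((i : ℕ) % (t-1)) := by
  rw [phiF_val, Nat.add_mul_mod_self_right, Nat.mod_eq_of_lt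
    (psiF_lt m t (by omega) (Nat.mod_lt _ (by omega)))]

lemma phiF_inj (m t : ℕ) (ht : 2 ≤ t) : Function.Injective (phiF m t ht) := by
  intro a b hab
  have h1 := phiF_mod m t ht a
  have h2 := phiF_mod m t ht b
  rw [hab] at h1
  have hj : (a : ℕ) % (t-1) = (b : ℕ) % (t-1) := psiF_inj m t (h1.symm.trans h2)
  have hval : psiF m t ((a:ℕ)%(t-1)) + (a:ℕ)/(t-1)*t
      = psiF m t ((b:ℕ)%(t-1)) + (b:ℕ)/(t-1)*t := by
    rw [← phiF_val m t ht a, ← phiF_val m t ht b, hab]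
  rw [hj] at hval
  have hk : (a : ℕ) / (t-1) = (b : ℕ) / (t-1) :=
    Nat.eq_of_mul_eq_mul_right (show 0 < t by omega) (Nat.add_left_cancel hval)
  have ha := Nat.div_add_mod (a : ℕ) (t-1)
  have hb := Nat.div_add_mod (b : ℕ) (t-1)
  rw [hk, hj] at ha
  exact Fin.ext (by omega)

lemma phiF_adj (m t : ℕ) (ht : 2 ≤ t) {a b : Fin (m - 1 - (m-1)/t)}
    (h : (turanGraph (m - 1 - (m-1)/t) (t-1)).Adj a b) :
    (turanGraph m t).Adj (phiF m t ht a) (phiF m t ht b) := by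
  have hab : (a : ℕ) % (t-1) ≠ (b : ℕ) % (t-1) := h
  show (phiF m t ht a : ℕ) % t ≠ (phiF m t ht b : ℕ) % t
  rw [phiF_mod, phiF_mod]
  exact fun hc => hab (psiF_inj m t hc)

lemma phiF_mod_ne (m t : ℕ) (ht : 2 ≤ t) (i : Fin (m - 1 - (m-1)/t)) :
    ((phiF m t ht i : ℕ)) % t ≠ (m-1) % t := by
  rw [phiF_mod]; exact psiF_ne m t _

lemma tNum_rec (m t r : ℕ) (hm : 1 ≤ m) (ht : 1 ≤ t) (hr : 1 ≤ r) :
    tNum (m-1) t r + tNum (m - 1 - (m-1)/t) (t-1) (r-1) ≤ tNum m t r := by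
  classical
  set z : Fin m := ⟨m-1, by omega⟩ with hzdef
  set P := (univ : Finset (Fin m)).powerset.filter
    (fun A => (turanGraph m t).IsNClique r A) with hPdef
  have hPm : tNum m t r = #P := by
    rw [tNum, cliqueCnt_eq, hPdef]
  have hpart : #(P.filter (fun A => z ∉ A)) + #(P.filter (fun A => ¬ z ∉ A)) = #P :=
    Finset.card_filter_add_card_filter_not _
  have hA : tNum (m-1) t r ≤ #(P.filter (fun A => z ∉ A)) := by
    rw [tNum, cliqueCnt_eq]
    apply Finset.card_le_card_of_injOn
      (fun A => A.image (Fin.castLE (show m - 1 ≤ m by omega)))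
    · intro A hA
      simp only [mem_coe, mem_filter, mem_powerset] at hA
      simp only [hPdef, mem_coe, mem_filter, mem_powerset]
      refine ⟨⟨Finset.subset_univ _, ?_⟩, ?_⟩
      · apply isNClique_image (Fin.castLE_injective _) _ hA.2
        intro a b hab
        simpa [turanGraph] using hab
      · intro hz
        obtain ⟨x, -, hx⟩ := Finset.mem_image.1 hz
        have := congrArg Fin.val hx
        simp only [Fin.coe_castLE, hzdef] at this
        omega
    · intro A _ B _ hAB
      exact Finset.image_injective (Fin.castLE_injective _) hAB
  have hB : tNum (m - 1 - (m-1)/t) (t-1) (r-1) ≤ #(P.filter (fun A => ¬ z ∉ A)) := by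
    rcases Nat.lt_or_ge t 2 with ht1 | ht2
    · -- t = 1
      have ht1' : t = 1 := by omega
      have hD0 : m - 1 - (m-1)/t = 0 := by rw [ht1']; simp
      rw [hD0]
      rcases Nat.lt_or_ge r 2 with hr1 | hr2
      · have hr1' : r = 1 := by omega
        rw [hr1']
        rw [show (1:ℕ) - 1 = 0 from rfl, tNum, cliqueCnt_zero]
        refine Finset.card_pos.2 ⟨{z}, ?_⟩
        simp only [mem_filter, hPdef, mem_powerset, not_not]
        refine ⟨⟨Finset.subset_univ _, ?_⟩, Finset.mem_singleton_self z⟩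
        rw [hr1']
        exact isNClique_singleton.2 rfl
      · rw [tNum_zero (by omega)]
        exact Nat.zero_le _
    · -- t ≥ 2
      rw [tNum, cliqueCnt_eq]
      apply Finset.card_le_card_of_injOn
        (fun B => insert z (B.image (phiF m t ht2)))
      · intro B hB
        simp only [mem_coe, mem_filter, mem_powerset] at hB
        have himg : (turanGraph m t).IsNClique (r-1) (B.image (phiF m t ht2)) :=
          isNClique_image (phiF_inj m t ht2) (fun a b hab => phiF_adj m t ht2 hab) hB.2
        have hclq : (turanGraph m t).IsNClique (r-1+1) (insert z (B.image (phiF m t ht2))) := by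
          apply himg.insert
          intro b hb
          obtain ⟨i, -, rfl⟩ := Finset.mem_image.1 hb
          show (z : ℕ) % t ≠ (phiF m t ht2 i : ℕ) % t
          exact fun hc => phiF_mod_ne m t ht2 i (hc ▸ rfl)
        rw [show r - 1 + 1 = r by omega] at hclq
        simp only [hPdef, mem_coe, mem_filter, mem_powerset, not_not]
        exact ⟨⟨Finset.subset_univ _, hclq⟩, Finset.mem_insert_self _ _⟩
      · intro B1 hB1 B2 hB2 h12
        have hz1 : z ∉ B1.image (phiF m t ht2) := by
          intro hz
          obtain ⟨i, -, hx⟩ := Finset.mem_image.1 hz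
          exact phiF_mod_ne m t ht2 i (by rw [hx])
        have hz2 : z ∉ B2.image (phiF m t ht2) := by
          intro hz
          obtain ⟨i, -, hx⟩ := Finset.mem_image.1 hz
          exact phiF_mod_ne m t ht2 i (by rw [hx])
        have h12' : insert z (B1.image (phiF m t ht2)) = insert z (B2.image (phiF m t ht2)) := h12
        have : B1.image (phiF m t ht2) = B2.image (phiF m t ht2) := by
          rw [← Finset.erase_insert hz1, ← Finset.erase_insert hz2, h12']
        exact Finset.image_injective (phiF_inj m t ht2) this
  rw [hPm, ← hpart]
  exact Nat.add_le_add hA hB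

/-- class size of the residue class of `i` -/
def clsF (m t : ℕ) (i : Fin m) : ℕ :=
  #(univ.filter (fun j : Fin m => (j : ℕ) % t = (i : ℕ) % t))

lemma turan_degree_add_cls (m t : ℕ) (i : Fin m) :
    (turanGraph m t).degree i + clsF m t i = m := by
  classical
  have h1 : (turanGraph m t).degree i
      = #(univ.filter (fun j : Fin m => ¬ ((j : ℕ) % t = (i : ℕ) % t))) := by
    rw [degree, neighborFinset_eq_filter]
    congr 1
    apply Finset.filter_congr
    intro j _
    show (turanGraph m t).Adj i j ↔ _
    constructor
    · exact fun h => fun hc => h hc.symm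
    · exact fun h => fun hc => h hc.symm
  rw [h1, clsF]
  rw [Nat.add_comm]
  rw [Finset.card_filter_add_card_filter_not]
  simp

lemma cls_ge (m t : ℕ) (ht : 1 ≤ t) (i : Fin m) : (m-1)/t ≤ clsF m t i := by
  classical
  set q := (m-1)/t with hq
  set c := (i : ℕ) % t with hc
  have hct : c < t := Nat.mod_lt _ (by omega)
  have hm : 1 ≤ m := by have := i.2; omega
  have hqt : q * t ≤ m - 1 := Nat.div_mul_le_self _ _
  rw [clsF]
  calc q = #(Finset.range q) := (Finset.card_range q).symm
    _ ≤ _ := ?_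
  apply Finset.card_le_card_of_injOn (fun k => (⟨(c + k * t) % m, Nat.mod_lt _ (by omega)⟩ : Fin m))
  · intro k hk
    rw [Finset.mem_coe, Finset.mem_range] at hk
    have hlt : c + k * t < m := by
      have h4 : k * t + t ≤ q * t := by
        have : (k+1) * t ≤ q * t := Nat.mul_le_mul_right t (by omega)
        have h5 : (k+1) * t = k * t + t := by ring
        omega
      omega
    simp only [Finset.mem_coe, Finset.mem_filter, Finset.mem_univ, true_and]
    show ((c + k * t) % m) % t = (i : ℕ) % t
    rw [Nat.mod_eq_of_lt hlt, Nat.add_mul_mod_self_right, ← hc, Nat.mod_eq_of_lt hct]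
  · intro k1 hk1 k2 hk2 h12
    rw [Finset.mem_coe, Finset.mem_range] at hk1 hk2
    have hv := congrArg Fin.val h12
    simp only at hv
    have hlt : ∀ k, k < q → c + k * t < m := by
      intro k hk
      have h4 : (k+1) * t ≤ q * t := Nat.mul_le_mul_right t (by omega)
      have h5 : (k+1) * t = k * t + t := by ring
      omega
    rw [Nat.mod_eq_of_lt (hlt _ hk1), Nat.mod_eq_of_lt (hlt _ hk2)] at hv
    exact Nat.eq_of_mul_eq_mul_right (show 0 < t by omega) (by omega)

lemma cls_last (m t : ℕ) (ht : 1 ≤ t) (hm : 1 ≤ m) :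
    (m-1)/t + 1 ≤ clsF m t ⟨m-1, by omega⟩ := by
  classical
  set q := (m-1)/t with hq
  set c := (m-1) % t with hc
  have hct : c < t := Nat.mod_lt _ (by omega)
  have hcq : c + t * q = m - 1 := Nat.mod_add_div _ _
  rw [clsF]
  calc q + 1 = #(Finset.range (q+1)) := (Finset.card_range _).symm
    _ ≤ _ := ?_
  apply Finset.card_le_card_of_injOn (fun k => (⟨(c + k * t) % m, Nat.mod_lt _ (by omega)⟩ : Fin m))
  · intro k hk
    rw [Finset.mem_coe, Finset.mem_range] at hk
    have hlt : c + k * t < m := by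
      have h4 : k * t ≤ q * t := Nat.mul_le_mul_right t (by omega)
      have h5 : q * t = t * q := Nat.mul_comm _ _
      omega
    simp only [Finset.mem_coe, Finset.mem_filter, Finset.mem_univ, true_and]
    show ((c + k * t) % m) % t = (m-1) % t
    rw [Nat.mod_eq_of_lt hlt, Nat.add_mul_mod_self_right, Nat.mod_eq_of_lt hct]
  · intro k1 hk1 k2 hk2 h12
    rw [Finset.mem_coe, Finset.mem_range] at hk1 hk2
    have hv := congrArg Fin.val h12
    simp only at hv
    have hlt : ∀ k, k < q + 1 → c + k * t < m := by
      intro k hk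
      have h4 : k * t ≤ q * t := Nat.mul_le_mul_right t (by omega)
      have h5 : q * t = t * q := Nat.mul_comm _ _
      omega
    rw [Nat.mod_eq_of_lt (hlt _ hk1), Nat.mod_eq_of_lt (hlt _ hk2)] at hv
    exact Nat.eq_of_mul_eq_mul_right (show 0 < t by omega) (by omega)

lemma exists_small_degree (m t : ℕ) (hm : 1 ≤ m) (ht : 1 ≤ t)
    (H : SimpleGraph (Fin m)) [DecidableRel H.Adj] (hfree : H.CliqueFree (t+1)) :
    ∃ i : Fin m, H.degree i ≤ m - 1 - (m-1)/t := by
  classical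
  by_contra hcon
  push_neg at hcon
  set q := (m-1)/t with hq
  have hqm' : q ≤ m - 1 := by
    have := Nat.div_le_self (m-1) t
    omega
  set z : Fin m := ⟨m-1, by omega⟩ with hz
  -- sum of cls lower bound
  have hS : m * q + 1 ≤ ∑ i : Fin m, clsF m t i := by
    rw [← Finset.sum_erase_add _ _ (Finset.mem_univ z)]
    have h1 : (#(univ.erase z)) • q ≤ ∑ i ∈ univ.erase z, clsF m t i :=
      Finset.card_nsmul_le_sum _ _ _ (fun i _ => cls_ge m t ht i)
    have h2 : #((univ : Finset (Fin m)).erase z) = m - 1 := by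
      rw [Finset.card_erase_of_mem (Finset.mem_univ z)]
      simp
    have h3 : q + 1 ≤ clsF m t z := cls_last m t ht hm
    have h4 : (m-1) * q + q = m * q := by
      have h5 : m - 1 + 1 = m := by omega
      calc (m-1) * q + q = (m-1+1) * q := by ring
        _ = m * q := by rw [h5]
    rw [h2] at h1
    simp only [smul_eq_mul] at h1
    omega
  -- degree sums
  have hdegsum : ∑ i : Fin m, (turanGraph m t).degree i + ∑ i : Fin m, clsF m t i = m * m := by
    rw [← Finset.sum_add_distrib]
    calc ∑ i : Fin m, ((turanGraph m t).degree i + clsF m t i)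
        = ∑ _i : Fin m, m := Finset.sum_congr rfl (fun i _ => turan_degree_add_cls m t i)
      _ = m * m := by simp [Finset.sum_const, Finset.card_univ]
  have hedge : #H.edgeFinset ≤ #(turanGraph m t).edgeFinset :=
    (isTuranMaximal_turanGraph (show 0 < t by omega)).2 hfree
  have hsum1 : ∑ i : Fin m, H.degree i = 2 * #H.edgeFinset := by
    rw [← sum_degrees_eq_twice_card_edges]
  have hsum2 : ∑ i : Fin m, (turanGraph m t).degree i = 2 * #(turanGraph m t).edgeFinset := by
    rw [← sum_degrees_eq_twice_card_edges]
  have hlow : m * (m - q) ≤ ∑ i : Fin m, H.degree i := by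
    have h1 : (#(univ : Finset (Fin m))) • (m - q) ≤ ∑ i : Fin m, H.degree i := by
      apply Finset.card_nsmul_le_sum
      intro i _
      have := hcon i
      omega
    simpa [Finset.card_univ, smul_eq_mul] using h1
  have hmq : m * (m - q) + m * q = m * m := by
    rw [← Nat.mul_add, Nat.sub_add_cancel (by omega)]
  omega

lemma main_ind {V : Type*} [DecidableEq V] (G : SimpleGraph V) (N : ℕ) :
    ∀ (t r : ℕ) (s : Finset V), #s ≤ N →
      (∀ A : Finset V, A ⊆ s → ¬ G.IsNClique (t+1) A) →
      cliqueCnt G r s ≤ tNum (#s) t r := by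
  classical
  induction N with
  | zero =>
    intro t r s hs hfree
    have hse : s = ∅ := Finset.card_eq_zero.1 (by omega)
    subst hse
    rcases Nat.eq_zero_or_pos r with hr0 | hr1
    · subst hr0
      rw [cliqueCnt_zero, tNum, cliqueCnt_zero]
    · rw [cliqueCnt_empty G hr1]
      exact Nat.zero_le _
  | succ N ih =>
    intro t r s hs hfree
    rcases Nat.eq_zero_or_pos r with hr0 | hr1
    · subst hr0
      rw [cliqueCnt_zero, tNum, cliqueCnt_zero]
    rcases Finset.eq_empty_or_nonempty s with rfl | hsne
    · rw [cliqueCnt_empty G hr1]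
      exact Nat.zero_le _
    rcases Nat.eq_zero_or_pos t with ht0 | ht1
    · subst ht0
      obtain ⟨v, hv⟩ := hsne
      exact absurd (isNClique_singleton.2 rfl)
        (hfree {v} (Finset.singleton_subset_iff.2 hv))
    -- main case
    set m := #s with hm
    have hm1 : 1 ≤ m := Finset.card_pos.2 hsne
    set e := s.equivFin with he
    set f : Fin m → V := fun i => ((e.symm i : s) : V) with hf
    have hfmem : ∀ i, f i ∈ s := fun i => (e.symm i).2
    have hfinj : Function.Injective f := fun a b hab => e.symm.injective (Subtype.ext hab)
    set H : SimpleGraph (Fin m) := SimpleGraph.comap f G with hH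
    have hHfree : H.CliqueFree (t+1) := by
      intro A hA
      refine hfree (A.image f) ?_ (isNClique_image hfinj (fun a b hab => hab) hA)
      intro x hx
      obtain ⟨i, -, rfl⟩ := Finset.mem_image.1 hx
      exact hfmem i
    obtain ⟨i0, hdeg⟩ := exists_small_degree m t hm1 ht1 H hHfree
    set v := f i0 with hv
    have hvs : v ∈ s := hfmem i0
    set Nv := (s.erase v).filter (fun w => G.Adj v w) with hNvdef
    have hNveq : Nv = (univ.filter (fun j => H.Adj i0 j)).image f := by
      ext w
      simp only [hNvdef, mem_filter, mem_erase, Finset.mem_image, mem_univ, true_and]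
      constructor
      · rintro ⟨⟨hwv, hws⟩, hadj⟩
        refine ⟨e ⟨w, hws⟩, ?_, ?_⟩
        · show G.Adj (f i0) (f (e ⟨w, hws⟩))
          have hfw : f (e ⟨w, hws⟩) = w := by simp [hf]
          rw [hfw]
          exact hadj
        · simp [hf]
      · rintro ⟨j, hadj, rfl⟩
        have hadj' : G.Adj v (f j) := hadj
        exact ⟨⟨fun hc => G.irrefl (hc ▸ hadj'), hfmem j⟩, hadj'⟩
    have hNvcard : #Nv = H.degree i0 := by
      rw [hNveq, Finset.card_image_of_injective _ hfinj, degree, neighborFinset_eq_filter]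
    have hNvle : #Nv ≤ m - 1 - (m-1)/t := by rw [hNvcard]; exact hdeg
    have hNvsub : Nv ⊆ s := fun w hw => (Finset.mem_erase.1 (Finset.mem_filter.1 hw).1).2
    -- split
    have hsplit : cliqueCnt G r s = cliqueCnt G (r-1) Nv + cliqueCnt G r (s.erase v) := by
      rw [cliqueCnt_eq G r s,
        ← Finset.card_filter_add_card_filter_not
          (s := s.powerset.filter (fun A => G.IsNClique r A)) (p := fun A => v ∈ A)]
      congr 1
      · rw [cliqueCnt_eq]
        refine Finset.card_bij (fun A _ => A.erase v) ?_ ?_ ?_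
        · intro A hA
          simp only [Finset.mem_filter, Finset.mem_powerset] at hA
          obtain ⟨⟨hAs, hAcl⟩, hvA⟩ := hA
          simp only [Finset.mem_filter, Finset.mem_powerset]
          constructor
          · intro w hw
            obtain ⟨hwv, hwA⟩ := Finset.mem_erase.1 hw
            refine Finset.mem_filter.2 ⟨Finset.mem_erase.2 ⟨hwv, hAs hwA⟩, ?_⟩
            exact hAcl.1 hvA hwA (fun hc => hwv hc.symm)
          · constructor
            · exact hAcl.1.subset (Finset.coe_subset.2 (Finset.erase_subset _ _))
            · rw [Finset.card_erase_of_mem hvA, hAcl.2]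
        · intro A1 hA1 A2 hA2 h12
          simp only [Finset.mem_filter, Finset.mem_powerset] at hA1 hA2
          have h12' : A1.erase v = A2.erase v := h12
          rw [← Finset.insert_erase hA1.2, ← Finset.insert_erase hA2.2, h12']
        · intro B hB
          simp only [Finset.mem_filter, Finset.mem_powerset] at hB
          obtain ⟨hBNv, hBcl⟩ := hB
          have hvB : v ∉ B := fun hc =>
            (Finset.mem_erase.1 (Finset.mem_filter.1 (hBNv hc)).1).1 rfl
          refine ⟨insert v B, ?_, Finset.erase_insert hvB⟩
          have hclq : G.IsNClique (r-1+1) (insert v B) :=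
            hBcl.insert (fun b hb => (Finset.mem_filter.1 (hBNv hb)).2)
          rw [show r - 1 + 1 = r by omega] at hclq
          simp only [Finset.mem_filter, Finset.mem_powerset]
          exact ⟨⟨Finset.insert_subset hvs (hBNv.trans hNvsub), hclq⟩,
            Finset.mem_insert_self _ _⟩
      · rw [cliqueCnt_eq]
        congr 1
        ext A
        simp only [Finset.mem_filter, Finset.mem_powerset, Finset.subset_erase]
        tauto
    -- apply induction hypotheses
    have hIH1 : cliqueCnt G r (s.erase v) ≤ tNum (m-1) t r := by
      have h := ih t r (s.erase v)
        (by rw [Finset.card_erase_of_mem hvs]; omega)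
        (fun A hA => hfree A (hA.trans (Finset.erase_subset _ _)))
      rwa [Finset.card_erase_of_mem hvs] at h
    have hNvN : #Nv ≤ N := by
      have h1 := Finset.card_erase_of_mem hvs
      have h2 := Finset.card_le_card (show Nv ⊆ s.erase v from Finset.filter_subset _ _)
      omega
    have hIH2 : cliqueCnt G (r-1) Nv ≤ tNum (#Nv) (t-1) (r-1) := by
      apply ih (t-1) (r-1) Nv hNvN
      intro A hA hclq
      have hvA : v ∉ A := fun hc =>
        (Finset.mem_erase.1 (Finset.mem_filter.1 (hA hc)).1).1 rfl
      have hclq2 : G.IsNClique (t-1+1+1) (insert v A) :=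
        hclq.insert (fun b hb => (Finset.mem_filter.1 (hA hb)).2)
      rw [show t - 1 + 1 + 1 = t + 1 by omega] at hclq2
      exact hfree _ (Finset.insert_subset hvs (hA.trans hNvsub)) hclq2
    calc cliqueCnt G r s = cliqueCnt G (r-1) Nv + cliqueCnt G r (s.erase v) := hsplit
      _ ≤ tNum (#Nv) (t-1) (r-1) + tNum (m-1) t r := Nat.add_le_add hIH2 hIH1
      _ ≤ tNum (m - 1 - (m-1)/t) (t-1) (r-1) + tNum (m-1) t r :=
          Nat.add_le_add_right (tNum_mono _ _ hNvle) _
      _ ≤ tNum m t r := by rw [Nat.add_comm]; exact tNum_rec m t r hm1 ht1 hr1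


/-- **Erdős's clique-counting generalization of Turán's theorem**: for `n ≥ t ≥ r ≥ 2`,
every `n`-vertex `K_{t+1}`-free graph has at most as many `r`-cliques as the Turán graph
`T(n,t)`. -/
theorem erdos_clique_count (n t r : ℕ) (hr : 2 ≤ r) (hrt : r ≤ t) (htn : t ≤ n)
    (G : SimpleGraph (Fin n)) (hG : G.CliqueFree (t + 1)) :
    {A : Finset (Fin n) | G.IsNClique r A}.ncard ≤
      {A : Finset (Fin n) | (turanGraph n t).IsNClique r A}.ncard := by
  classical
  have key : ∀ (K : SimpleGraph (Fin n)),
      {A : Finset (Fin n) | K.IsNClique r A}.ncard = cliqueCnt K r Finset.univ := by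
    intro K
    have hset : {A : Finset (Fin n) | K.IsNClique r A}
        = ↑((univ : Finset (Finset (Fin n))).filter (fun A => K.IsNClique r A)) := by
      ext A
      simp
    rw [hset, Set.ncard_coe_finset, cliqueCnt_eq, Finset.powerset_univ]
  rw [key G, key (turanGraph n t)]
  have h := main_ind G n t r Finset.univ (by simp) (fun A _ => hG A)
  have hcard : #(univ : Finset (Fin n)) = n := by simp
  rw [hcard] at h
  exact h
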